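/- Let n ≥ r ≥ 1. The function d(x,y) = min_{U ∈ U(r)} ‖x − y U‖₂ · ‖x + y U‖₂ on ℂ^{n×r} × ℂ^{n×r} is nonnegative, symmetric, satisfies the triangle inequality d(x,y) ≤ d(x,z) + d(z,y) for all x,y,z ∈ ℂ^{n×r}, and d(x,y) = 0 if and only if there exists U ∈ U(r) with x = y U. Hence d is a metric on the quotient ℂ^{n×r}/U(r). -/

import Mathlib

open Matrix Filter
open scoped ComplexOrder

/-- The square root of a positive semidefinite matrix, as defined in Mathlib (Dec 2024);
removed from current Mathlib. -/
noncomputable def Matrix.PosSemidef.sqrt {n : Type*} [Fintype n] [DecidableEq n] {𝕜 : Type*}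
    [RCLike 𝕜] {A : Matrix n n 𝕜} (hA : A.PosSemidef) : Matrix n n 𝕜 :=
  hA.1.eigenvectorUnitary.1 * diagonal ((↑) ∘ Real.sqrt ∘ hA.1.eigenvalues) *
  (star hA.1.eigenvectorUnitary : Matrix n n 𝕜)

noncomputable def frob {p q : ℕ} (x : Matrix (Fin p) (Fin q) ℂ) : ℝ :=
  Real.sqrt (Matrix.trace (xᴴ * x)).re

noncomputable def rinner {p q : ℕ} (X Y : Matrix (Fin p) (Fin q) ℂ) : ℝ :=
  (Matrix.trace (Xᴴ * Y)).re

noncomputable def nuclear {p q : ℕ} (x : Matrix (Fin p) (Fin q) ℂ) : ℝ :=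
  (Matrix.trace (Matrix.posSemidef_conjTranspose_mul_self x).sqrt).re

noncomputable def theta {n r : ℕ} (x : Matrix (Fin n) (Fin r) ℂ) : Matrix (Fin n) (Fin n) ℂ :=
  (Matrix.posSemidef_self_mul_conjTranspose x).sqrt

noncomputable def psi {n r : ℕ} (x : Matrix (Fin n) (Fin r) ℂ) : Matrix (Fin n) (Fin n) ℂ :=
  frob x • theta x

noncomputable def Dmet {n r : ℕ} (x y : Matrix (Fin n) (Fin r) ℂ) : ℝ :=
  ⨅ U : Matrix.unitaryGroup (Fin r) ℂ, frob (x - y * (U : Matrix (Fin r) (Fin r) ℂ))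

noncomputable def dmet {n r : ℕ} (x y : Matrix (Fin n) (Fin r) ℂ) : ℝ :=
  ⨅ U : Matrix.unitaryGroup (Fin r) ℂ,
    frob (x - y * (U : Matrix (Fin r) (Fin r) ℂ)) * frob (x + y * (U : Matrix (Fin r) (Fin r) ℂ))


set_option linter.unusedVariables false

lemma trace_re_eq {p q : ℕ} (A : Matrix (Fin p) (Fin q) ℂ) :
    (Matrix.trace (Aᴴ * A)).re = ∑ j, ∑ i, Complex.normSq (A i j) := by
  simp [Matrix.trace, Matrix.mul_apply, Matrix.conjTranspose_apply, Matrix.diag,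
    Complex.re_sum, Complex.normSq_apply]

lemma frob_nonneg {p q : ℕ} (A : Matrix (Fin p) (Fin q) ℂ) : 0 ≤ frob A :=
  Real.sqrt_nonneg _

lemma frob_eq_zero {p q : ℕ} {A : Matrix (Fin p) (Fin q) ℂ} (h : frob A = 0) : A = 0 := by
  rw [frob, Real.sqrt_eq_zero', trace_re_eq] at h
  replace h := le_antisymm h (Finset.sum_nonneg fun j _ => Finset.sum_nonneg fun i _ => Complex.normSq_nonneg _)
  ext i j
  have := (Finset.sum_eq_zero_iff_of_nonneg
    (fun i _ => Complex.normSq_nonneg (A i j))).mp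
    ((Finset.sum_eq_zero_iff_of_nonneg
      (fun j _ => Finset.sum_nonneg fun i _ => Complex.normSq_nonneg (A i j))).mp h j
      (Finset.mem_univ j)) i (Finset.mem_univ i)
  simpa [Complex.normSq_eq_zero] using this

lemma frob_zero {p q : ℕ} : frob (0 : Matrix (Fin p) (Fin q) ℂ) = 0 := by
  simp [frob]

lemma frob_neg {p q : ℕ} (A : Matrix (Fin p) (Fin q) ℂ) : frob (-A) = frob A := by
  simp [frob, trace_re_eq]

noncomputable def emb {p q : ℕ} (A : Matrix (Fin p) (Fin q) ℂ) :
    EuclideanSpace ℂ (Fin p × Fin q) :=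
  (WithLp.equiv 2 ((Fin p × Fin q) → ℂ)).symm (fun ij => A ij.1 ij.2)

lemma emb_add {p q : ℕ} (A B : Matrix (Fin p) (Fin q) ℂ) :
    emb (A + B) = emb A + emb B := by
  ext ij; simp [emb]

lemma frob_eq_norm_emb {p q : ℕ} (A : Matrix (Fin p) (Fin q) ℂ) : frob A = ‖emb A‖ := by
  rw [EuclideanSpace.norm_eq, frob, trace_re_eq]
  congr 1
  rw [Fintype.sum_prod_type, Finset.sum_comm]
  congr 1; ext j; congr 1; ext i
  simp [emb, Complex.sq_norm, ← Complex.normSq_eq_norm_sq]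

lemma frob_mul_unitary {p q : ℕ} (A : Matrix (Fin p) (Fin q) ℂ)
    (U : Matrix (Fin q) (Fin q) ℂ) (hU : U ∈ Matrix.unitaryGroup (Fin q) ℂ) :
    frob (A * U) = frob A := by
  have hUU : U * star U = 1 := (Matrix.mem_unitaryGroup_iff).mp hU
  rw [frob, frob]
  congr 2
  rw [Matrix.conjTranspose_mul, Matrix.mul_assoc, Matrix.trace_mul_comm]
  rw [show Aᴴ * (A * U) * Uᴴ = Aᴴ * A * (U * Uᴴ) by simp only [Matrix.mul_assoc]]
  rw [show (Uᴴ : Matrix (Fin q) (Fin q) ℂ) = star U from rfl] at *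
  rw [hUU, Matrix.mul_one]

lemma ptolemy_vec {V : Type*} [NormedAddCommGroup V] [InnerProductSpace ℝ V]
    (v w u : V) : ‖v + w‖ * ‖v + u‖ ≤ ‖v‖ * ‖v + w + u‖ + ‖w‖ * ‖u‖ := by
  have H := EuclideanGeometry.mul_dist_le_mul_dist_add_mul_dist
    (0 : V) v (v + w) (-u)
  have h1 : v - (v + w) = -w := by abel
  simpa only [dist_eq_norm, zero_sub, norm_neg, sub_neg_eq_add, zero_add, h1] using H

/-- Ptolemy-type inequality for the Frobenius norm. -/
lemma key_ptolemy {p q : ℕ} (a b d : Matrix (Fin p) (Fin q) ℂ) :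
    frob (a + b) * frob (a + d) ≤ frob a * frob (a + b + d) + frob b * frob d := by
  have H := ptolemy_vec (emb a) (emb b) (emb d)
  simpa [frob_eq_norm_emb, emb_add] using H

lemma pointwise_tri {n r : ℕ} (x z y : Matrix (Fin n) (Fin r) ℂ)
    (U V : Matrix (Fin r) (Fin r) ℂ) (hU : U ∈ Matrix.unitaryGroup (Fin r) ℂ)
    (hV : V ∈ Matrix.unitaryGroup (Fin r) ℂ) :
    frob (x - y * (V * U)) * frob (x + y * (V * U)) ≤
      frob (x - z * U) * frob (x + z * U) + frob (z - y * V) * frob (z + y * V) := by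
  set a := x - z * U with ha
  set b := (z - y * V) * U with hb
  set d := (z + y * V) * U with hd
  have hab : a + b = x - y * (V * U) := by
    rw [ha, hb, Matrix.sub_mul, ← Matrix.mul_assoc]; abel
  have had : a + d = x + y * (V * U) := by
    rw [ha, hd, Matrix.add_mul, ← Matrix.mul_assoc]; abel
  have habd : a + b + d = x + z * U := by
    rw [ha, hb, hd, Matrix.sub_mul, Matrix.add_mul]; abel
  have H := key_ptolemy a b d
  rw [habd, hab, had, hb, hd, frob_mul_unitary _ _ hU, frob_mul_unitary _ _ hU] at H
  exact H

lemma entry_bound {r : ℕ} {A : Matrix (Fin r) (Fin r) ℂ}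
    (hA : A ∈ Matrix.unitaryGroup (Fin r) ℂ) (i j : Fin r) : ‖A i j‖ ≤ 1 := by
  have hA' : star A * A = 1 := (Matrix.mem_unitaryGroup_iff').mp hA
  have h1 : ∑ k, Complex.normSq (A k j) = 1 := by
    have := congrArg (fun M : Matrix (Fin r) (Fin r) ℂ => (M j j).re) hA'
    simpa [Matrix.mul_apply, Matrix.star_eq_conjTranspose, Matrix.conjTranspose_apply,
      Complex.re_sum, Complex.normSq_apply, Matrix.one_apply] using this
  have h2 : Complex.normSq (A i j) ≤ 1 := by
    rw [← h1]
    exact Finset.single_le_sum (fun k _ => Complex.normSq_nonneg (A k j)) (Finset.mem_univ i)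
  rw [Complex.norm_def]
  exact Real.sqrt_le_one.mpr h2

lemma isCompact_ug (r : ℕ) :
    IsCompact (Matrix.unitaryGroup (Fin r) ℂ : Set (Matrix (Fin r) (Fin r) ℂ)) := by
  have hof : Continuous (Matrix.of : (Fin r → Fin r → ℂ) → Matrix (Fin r) (Fin r) ℂ) :=
    continuous_matrix fun i j => continuous_apply_apply i j
  have hD : IsCompact (Set.pi Set.univ fun _ : Fin r =>
      Set.pi Set.univ fun _ : Fin r => Metric.closedBall (0 : ℂ) 1) :=
    isCompact_univ_pi fun _ => isCompact_univ_pi fun _ => isCompact_closedBall 0 1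
  refine IsCompact.of_isClosed_subset (hD.image hof) ?_ ?_
  · have heq : (Matrix.unitaryGroup (Fin r) ℂ : Set (Matrix (Fin r) (Fin r) ℂ)) =
        (fun A : Matrix (Fin r) (Fin r) ℂ => (star A * A, A * star A)) ⁻¹'
          {((1 : Matrix (Fin r) (Fin r) ℂ), (1 : Matrix (Fin r) (Fin r) ℂ))} := by
      ext A
      constructor
      · intro h
        rcases Unitary.mem_iff.mp h with ⟨h1, h2⟩
        simp only [Set.mem_preimage, Set.mem_singleton_iff, Prod.mk.injEq]
        exact ⟨h1, h2⟩
      · intro h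
        simp only [Set.mem_preimage, Set.mem_singleton_iff, Prod.mk.injEq] at h
        exact Unitary.mem_iff.mpr ⟨h.1, h.2⟩
    rw [heq]
    have hc : Continuous fun A : Matrix (Fin r) (Fin r) ℂ => (star A * A, A * star A) := by
      simp only [Matrix.star_eq_conjTranspose]
      exact Continuous.prodMk
        (continuous_id.matrix_conjTranspose.matrix_mul continuous_id)
        (continuous_id.matrix_mul continuous_id.matrix_conjTranspose)
    exact isClosed_singleton.preimage hc
  · intro A hA
    refine ⟨fun i j => A i j, ?_, rfl⟩
    intro i _
    intro j _
    rw [Metric.mem_closedBall, dist_zero_right]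
    exact entry_bound hA i j

lemma dbdd {n r : ℕ} (x y : Matrix (Fin n) (Fin r) ℂ) :
    BddBelow (Set.range fun U : Matrix.unitaryGroup (Fin r) ℂ =>
      frob (x - y * (U : Matrix (Fin r) (Fin r) ℂ)) *
        frob (x + y * (U : Matrix (Fin r) (Fin r) ℂ))) := by
  refine ⟨0, ?_⟩
  rintro t ⟨U, rfl⟩
  exact mul_nonneg (frob_nonneg _) (frob_nonneg _)


/-- `d(x,y) = min_{U ∈ U(r)} ‖x − y U‖₂ ‖x + y U‖₂` is nonnegative, symmetric,
satisfies the triangle inequality, and vanishes exactly on `U(r)`-orbits;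
hence it is a metric on `ℂ^{n×r}/U(r)`. -/
theorem dmet_is_metric (n r : ℕ) (hr : 1 ≤ r) (hnr : r ≤ n) :
    (∀ x y : Matrix (Fin n) (Fin r) ℂ, 0 ≤ dmet x y) ∧
    (∀ x y : Matrix (Fin n) (Fin r) ℂ, dmet x y = dmet y x) ∧
    (∀ x y z : Matrix (Fin n) (Fin r) ℂ, dmet x y ≤ dmet x z + dmet z y) ∧
    (∀ x y : Matrix (Fin n) (Fin r) ℂ,
      dmet x y = 0 ↔ ∃ U ∈ Matrix.unitaryGroup (Fin r) ℂ, x = y * U) := by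
  haveI : Nonempty (Matrix.unitaryGroup (Fin r) ℂ) := ⟨1⟩
  have hnonneg : ∀ x y : Matrix (Fin n) (Fin r) ℂ, 0 ≤ dmet x y := fun x y =>
    Real.iInf_nonneg fun U => mul_nonneg (frob_nonneg _) (frob_nonneg _)
  -- symmetry key
  have hsymle : ∀ x y : Matrix (Fin n) (Fin r) ℂ, dmet y x ≤ dmet x y := by
    intro x y
    refine le_ciInf fun U => ?_
    set Uc : Matrix (Fin r) (Fin r) ℂ := (U : Matrix (Fin r) (Fin r) ℂ) with hUc
    have hsU : star Uc ∈ Matrix.unitaryGroup (Fin r) ℂ := Unitary.star_mem U.2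
    have h1 : star Uc * Uc = 1 := (Unitary.mem_iff.mp U.2).1
    have hsub : (x * star Uc - y) * Uc = x - y * Uc := by
      rw [Matrix.sub_mul, Matrix.mul_assoc, h1, Matrix.mul_one]
    have hadd : (x * star Uc + y) * Uc = x + y * Uc := by
      rw [Matrix.add_mul, Matrix.mul_assoc, h1, Matrix.mul_one]
    have key : frob (x - y * Uc) * frob (x + y * Uc) =
        frob (y - x * star Uc) * frob (y + x * star Uc) := by
      rw [← hsub, ← hadd, frob_mul_unitary _ _ U.2, frob_mul_unitary _ _ U.2,
        show x * star Uc - y = -(y - x * star Uc) by abel, frob_neg,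
        show x * star Uc + y = y + x * star Uc by abel]
    rw [key]
    exact ciInf_le (dbdd y x) ⟨star Uc, hsU⟩
  refine ⟨hnonneg, fun x y => le_antisymm (hsymle y x) (hsymle x y), ?_, ?_⟩
  · -- triangle
    intro x y z
    have step : ∀ U V : Matrix.unitaryGroup (Fin r) ℂ,
        dmet x y ≤ frob (x - z * (U : Matrix (Fin r) (Fin r) ℂ)) *
            frob (x + z * (U : Matrix (Fin r) (Fin r) ℂ)) +
          frob (z - y * (V : Matrix (Fin r) (Fin r) ℂ)) *
            frob (z + y * (V : Matrix (Fin r) (Fin r) ℂ)) := by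
      intro U V
      have hle : dmet x y ≤ frob (x - y * ((V * U : Matrix.unitaryGroup (Fin r) ℂ) :
          Matrix (Fin r) (Fin r) ℂ)) * frob (x + y * ((V * U : Matrix.unitaryGroup (Fin r) ℂ) :
          Matrix (Fin r) (Fin r) ℂ)) := ciInf_le (dbdd x y) (V * U)
      have hcoe : ((V * U : Matrix.unitaryGroup (Fin r) ℂ) : Matrix (Fin r) (Fin r) ℂ)
          = (V : Matrix (Fin r) (Fin r) ℂ) * U := rfl
      rw [hcoe] at hle
      exact hle.trans (pointwise_tri x z y U V U.2 V.2)
    have h1 : ∀ V : Matrix.unitaryGroup (Fin r) ℂ,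
        dmet x y - frob (z - y * (V : Matrix (Fin r) (Fin r) ℂ)) *
          frob (z + y * (V : Matrix (Fin r) (Fin r) ℂ)) ≤ dmet x z := fun V =>
      le_ciInf fun U => by have := step U V; linarith
    have h2 : dmet x y - dmet x z ≤ dmet z y :=
      le_ciInf fun V => by have := h1 V; linarith
    linarith
  · -- zero iff
    intro x y
    constructor
    · intro h
      set g : Matrix (Fin r) (Fin r) ℂ → ℝ :=
        fun A => frob (x - y * A) * frob (x + y * A) with hg
      have hMsub : Continuous fun A : Matrix (Fin r) (Fin r) ℂ => x - y * A :=
        continuous_const.sub (continuous_const.matrix_mul continuous_id)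
      have hMadd : Continuous fun A : Matrix (Fin r) (Fin r) ℂ => x + y * A :=
        continuous_const.add (continuous_const.matrix_mul continuous_id)
      have hfc : ∀ (f : Matrix (Fin r) (Fin r) ℂ → Matrix (Fin n) (Fin r) ℂ),
          Continuous f → Continuous fun A => frob (f A) := by
        intro f hf
        exact Real.continuous_sqrt.comp (Complex.continuous_re.comp
          ((hf.matrix_conjTranspose.matrix_mul hf).matrix_trace))
      have hgc : Continuous g := (hfc _ hMsub).mul (hfc _ hMadd)
      obtain ⟨A₀, hA₀, hmin⟩ := (isCompact_ug r).exists_isMinOn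
        ⟨1, one_mem _⟩ hgc.continuousOn
      have hle : dmet x y ≤ g A₀ := ciInf_le (dbdd x y) ⟨A₀, hA₀⟩
      have hge : g A₀ ≤ dmet x y := le_ciInf fun U => isMinOn_iff.mp hmin _ U.2
      have hg0 : g A₀ = 0 := le_antisymm (h ▸ hge) (mul_nonneg (frob_nonneg _) (frob_nonneg _))
      rcases mul_eq_zero.mp hg0 with h0 | h0
      · exact ⟨A₀, hA₀, by have := frob_eq_zero h0; rwa [sub_eq_zero] at this⟩
      · refine ⟨-A₀, ?_, ?_⟩
        · have hA₀' : A₀ ∈ Matrix.unitaryGroup (Fin r) ℂ := hA₀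
          rw [Matrix.mem_unitaryGroup_iff] at hA₀' ⊢
          simpa using hA₀'
        · have := frob_eq_zero h0
          have hx : x = -(y * A₀) := by
            rw [← sub_eq_zero]; rw [sub_neg_eq_add]; exact this
          rw [hx, Matrix.mul_neg]
    · rintro ⟨U, hU, rfl⟩
      refine le_antisymm ?_ (hnonneg _ _)
      have : frob (y * U - y * U) * frob (y * U + y * U) = 0 := by
        rw [sub_self, frob_zero, zero_mul]
      calc dmet (y * U) y ≤ frob (y * U - y * U) * frob (y * U + y * U) :=
            ciInf_le (dbdd _ _) ⟨U, hU⟩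
        _ = 0 := this
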